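/- If x, y, z are real numbers with x > 2, y > 2, z ≤ 0, then x² + y² + z² − xyz + 8(x + y + z) + 28 > 0. -/
import Mathlib

theorem stmt3 (x y z : ℝ) (hx : x > 2) (hy : y > 2) (hz : z ≤ 0) :
    x^2 + y^2 + z^2 - x*y*z + 8*(x + y + z) + 28 > 0 := by
  nlinarith [sq_nonneg (x+4), sq_nonneg (y+4), sq_nonneg (z+4), mul_pos (sub_pos.mpr hx) (sub_pos.mpr hy), mul_nonneg (mul_nonneg (sub_pos.mpr hx).le (sub_pos.mpr hy).le) (neg_nonneg.mpr hz), sq_nonneg (x-y), sq_nonneg (x+y+z)]
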